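/- For every integer s ≥ 1 and every m ∈ ℕ, there exist nonnegative real numbers c_0, …, c_m such that X^m = ∑_{k=0}^m c_k·Q_k^s in the ring of real polynomials. -/

import Mathlib

open MeasureTheory Polynomial Filter

/-- The orthogonal polynomials `Q_n^s`: `Q_0 = 1`, `Q_1 = X`,
`X * Q_n = Q_{n+1} + √s * Q_n + Q_{n-1}`. -/
noncomputable def Qpoly (s : ℕ) : ℕ → Polynomial ℝ
  | 0 => 1
  | 1 => Polynomial.X
  | (n + 2) => Polynomial.X * Qpoly s (n + 1)
      - Polynomial.C (Real.sqrt s) * Qpoly s (n + 1) - Qpoly s n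

/-- Chebyshev polynomials of the second kind: `P_0 = 1`, `P_1 = X`,
`X * P_n = P_{n+1} + P_{n-1}`. -/
noncomputable def Ppoly : ℕ → Polynomial ℝ
  | 0 => 1
  | 1 => Polynomial.X
  | (n + 2) => Polynomial.X * Ppoly (n + 1) - Ppoly n

/-- The density of the absolutely continuous part of `ν_s`. -/
noncomputable def nuDensity (s : ℕ) (x : ℝ) : ℝ :=
  Real.sqrt (4 - (x - Real.sqrt s) ^ 2) / (2 * Real.pi * (x * Real.sqrt s + 1))

/-- The free Meixner measure `ν_s`. -/
noncomputable def nuMeas (s : ℕ) : Measure ℝ :=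
  volume.withDensity (fun x => ENNReal.ofReal
      (if |x - Real.sqrt s| ≤ 2 then nuDensity s x else 0))
    + ENNReal.ofReal (1 - 1 / (s : ℝ)) • Measure.dirac (-1 / Real.sqrt s)

/-- The density `f_c`. -/
noncomputable def fc (s : ℕ) (c x : ℝ) : ℝ :=
  (Real.exp c + Real.sqrt s) / (Real.exp c + Real.exp (-c) + Real.sqrt s - x)

/-- The measure `η_c^s = f_c · ν_s + 1_{c<0} ((e^{-c}-e^c)/(e^{-c}+√s)) δ_{e^c+√s+e^{-c}}`. -/
noncomputable def etaMeas (s : ℕ) (c : ℝ) : Measure ℝ :=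
  (nuMeas s).withDensity (fun x => ENNReal.ofReal (fc s c x))
    + (if c < 0 then
        ENNReal.ofReal ((Real.exp (-c) - Real.exp c) / (Real.exp (-c) + Real.sqrt s))
      else 0) • Measure.dirac (Real.exp c + Real.sqrt s + Real.exp (-c))

/-- Total variation distance between two Borel measures on `ℝ`. -/
noncomputable def dTV (μ ν : Measure ℝ) : ℝ :=
  ⨆ A : {A : Set ℝ // MeasurableSet A}, |(μ A.1).toReal - (ν A.1).toReal|

/-- Every monomial `X^m` is a nonnegative linear combination of the `Q_k^s`. -/
lemma Qkey (s n : ℕ) : (X : Polynomial ℝ) * Qpoly s (n + 1) =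
    Qpoly s (n + 2) + Polynomial.C (Real.sqrt s) * Qpoly s (n + 1) + Qpoly s n := by
  show _ = (X * Qpoly s (n + 1) - Polynomial.C (Real.sqrt s) * Qpoly s (n + 1) - Qpoly s n)
      + _ + _
  ring

lemma Qshift (s : ℕ) (c : ℕ → ℝ) : ∀ n : ℕ,
    (X : Polynomial ℝ) * ∑ k ∈ Finset.range (n + 1), Polynomial.C (c k) * Qpoly s k
      = (∑ j ∈ Finset.range (n + 2),
          Polynomial.C (c (j + 1) + if j = 0 then 0 else Real.sqrt s * c j + c (j - 1))
            * Qpoly s j)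
        - Polynomial.C (c (n + 1)) * Qpoly s n
        - Polynomial.C (c (n + 2) + Real.sqrt s * c (n + 1)) * Qpoly s (n + 1) := by
  intro n
  induction n with
  | zero =>
      simp [Finset.sum_range_succ, Qpoly, map_add, map_mul]
      ring
  | succ n ih =>
      rw [Finset.sum_range_succ (n := n + 1), mul_add, ih, Finset.sum_range_succ (n := n + 2)]
      rw [show (X : Polynomial ℝ) * (Polynomial.C (c (n + 1)) * Qpoly s (n + 1))
          = Polynomial.C (c (n + 1)) * (X * Qpoly s (n + 1)) by ring, Qkey]
      simp only [Nat.succ_ne_zero, if_false, map_add, map_mul]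
      have h21 : n + 2 - 1 = n + 1 := by omega
      rw [h21]
      ring

theorem stmt13 (s : ℕ) (hs : 1 ≤ s) (m : ℕ) :
    ∃ cs : ℕ → ℝ, (∀ k, 0 ≤ cs k) ∧
      (Polynomial.X : Polynomial ℝ) ^ m =
        ∑ k ∈ Finset.range (m + 1), Polynomial.C (cs k) * Qpoly s k := by
  suffices h : ∃ cs : ℕ → ℝ, (∀ k, 0 ≤ cs k) ∧ (∀ k, m < k → cs k = 0) ∧
      (Polynomial.X : Polynomial ℝ) ^ m =
        ∑ k ∈ Finset.range (m + 1), Polynomial.C (cs k) * Qpoly s k by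
    obtain ⟨cs, h1, _, h3⟩ := h; exact ⟨cs, h1, h3⟩
  induction m with
  | zero =>
      refine ⟨fun k => if k = 0 then 1 else 0, ?_, ?_, ?_⟩
      · intro k; dsimp only; split <;> norm_num
      · intro k hk; dsimp only; rw [if_neg (by omega)]
      · simp [Qpoly]
  | succ m ih =>
      obtain ⟨c, h1, h2, h3⟩ := ih
      refine ⟨fun j => c (j + 1) + if j = 0 then 0 else Real.sqrt s * c j + c (j - 1),
        ?_, ?_, ?_⟩
      · intro k
        have := Real.sqrt_nonneg (s : ℝ)
        dsimp only; split
        · exact add_nonneg (h1 _) le_rfl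
        · exact add_nonneg (h1 _) (add_nonneg (mul_nonneg this (h1 _)) (h1 _))
      · intro k hk
        have hk1 : c (k + 1) = 0 := h2 _ (by omega)
        have hk2 : c k = 0 := h2 _ (by omega)
        have hk3 : c (k - 1) = 0 := h2 _ (by omega)
        dsimp only; simp [hk1, hk2, hk3]
      · have hc1 : c (m + 1) = 0 := h2 _ (by omega)
        have hc2 : c (m + 2) = 0 := h2 _ (by omega)
        rw [pow_succ', h3, Qshift, hc1, hc2]
        simp
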